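/- Let k be a field of characteristic zero and d ≥ 1. In the quotient ring k[X_0, X_1, X_2, X_3]/(F_1, F_2, F_3, X_3 − 1), where F_1 = X_1, F_2 = X_2·X_3^{d−1} − X_0^d, F_3 = X_1·X_3^{d−1} − X_2^d, the image of X_0^δ is zero if and only if δ ≥ d^2. Equivalently, this quotient ring is isomorphic to k[X_0]/(X_0^{d^2}). -/

import Mathlib

open MvPolynomial

/-- In `k[X₀,X₁,X₂,X₃]/(X₁, X₂X₃^{d−1} − X₀^d, X₁X₃^{d−1} − X₂^d, X₃ − 1)` the image of
`X₀^δ` is zero iff `δ ≥ d²`; the quotient ring is isomorphic to `k[X₀]/(X₀^{d²})`. -/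
theorem stmt3 (k : Type*) [Field k] [CharZero k] (d : ℕ) (hd : 1 ≤ d) :
    let I : Ideal (MvPolynomial (Fin 4) k) :=
      Ideal.span {X 1, X 2 * X 3 ^ (d - 1) - X 0 ^ d, X 1 * X 3 ^ (d - 1) - X 2 ^ d, X 3 - 1}
    (∀ δ : ℕ, Ideal.Quotient.mk I ((X 0 : MvPolynomial (Fin 4) k) ^ δ) = 0 ↔ d ^ 2 ≤ δ) ∧
    Nonempty ((MvPolynomial (Fin 4) k ⧸ I) ≃+*
      (Polynomial k ⧸ Ideal.span {(Polynomial.X : Polynomial k) ^ (d ^ 2)})) := by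
  intro I
  set J : Ideal (Polynomial k) := Ideal.span {(Polynomial.X : Polynomial k) ^ (d ^ 2)} with hJ
  have hmem : ∀ g ∈ ({X 1, X 2 * X 3 ^ (d - 1) - X 0 ^ d, X 1 * X 3 ^ (d - 1) - X 2 ^ d,
      X 3 - 1} : Set (MvPolynomial (Fin 4) k)), Ideal.Quotient.mk I g = 0 := by
    intro g hg
    exact Ideal.Quotient.eq_zero_iff_mem.2 (Ideal.subset_span hg)
  have h1 : Ideal.Quotient.mk I (X 1) = 0 := hmem _ (by simp)
  have h3 : Ideal.Quotient.mk I (X 3) = 1 := by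
    have := hmem (X 3 - 1) (by simp)
    rw [map_sub, sub_eq_zero] at this
    simpa using this
  have h2 : Ideal.Quotient.mk I (X 2) = (Ideal.Quotient.mk I (X 0)) ^ d := by
    have := hmem (X 2 * X 3 ^ (d - 1) - X 0 ^ d) (by simp)
    rw [map_sub, sub_eq_zero, map_mul, map_pow, map_pow, h3, one_pow, mul_one] at this
    exact this
  have h2d : (Ideal.Quotient.mk I (X 2)) ^ d = 0 := by
    have := hmem (X 1 * X 3 ^ (d - 1) - X 2 ^ d) (by simp)
    rw [map_sub, sub_eq_zero, map_mul, map_pow, map_pow, h3, one_pow, mul_one, h1] at this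
    exact this.symm
  have h0 : (Ideal.Quotient.mk I (X 0)) ^ (d ^ 2) = 0 := by
    rw [pow_two, pow_mul, ← h2, h2d]
  -- forward map
  let v : Fin 4 → Polynomial k := ![Polynomial.X, 0, Polynomial.X ^ d, 1]
  have hv0 : v 0 = Polynomial.X := rfl
  have hv1 : v 1 = 0 := rfl
  have hv2 : v 2 = Polynomial.X ^ d := rfl
  have hv3 : v 3 = 1 := rfl
  let φ : MvPolynomial (Fin 4) k →+* Polynomial k ⧸ J :=
    (Ideal.Quotient.mk J).comp (aeval v).toRingHom
  have hφ : ∀ p : MvPolynomial (Fin 4) k, φ p = Ideal.Quotient.mk J (aeval v p) := fun _ => rfl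
  have hXJ : Ideal.Quotient.mk J ((Polynomial.X : Polynomial k) ^ (d ^ 2)) = 0 :=
    Ideal.Quotient.eq_zero_iff_mem.2 (Ideal.subset_span rfl)
  have hker : I ≤ RingHom.ker φ := by
    rw [Ideal.span_le]
    intro g hg
    simp only [SetLike.mem_coe, RingHom.mem_ker]
    rcases hg with rfl | rfl | rfl | rfl
    · rw [hφ, aeval_X, hv1, map_zero]
    · rw [hφ, map_sub, map_mul, map_pow, map_pow, aeval_X, aeval_X, aeval_X, hv0, hv2, hv3,
        one_pow, mul_one, sub_self, map_zero]
    · rw [hφ, map_sub, map_mul, map_pow, map_pow, aeval_X, aeval_X, aeval_X, hv1, hv2, hv3,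
        one_pow, mul_one, zero_sub, map_neg, ← pow_mul, ← pow_two, hXJ, neg_zero]
    · rw [hφ, map_sub, aeval_X, map_one, hv3, sub_self, map_zero]
  let F : (MvPolynomial (Fin 4) k ⧸ I) →+* Polynomial k ⧸ J := Ideal.Quotient.lift I φ hker
  have hF : ∀ p : MvPolynomial (Fin 4) k,
      F (Ideal.Quotient.mk I p) = Ideal.Quotient.mk J (aeval v p) := fun p =>
    Ideal.Quotient.lift_mk I φ hker
  let ψ : Polynomial k →+* MvPolynomial (Fin 4) k ⧸ I :=
    (Polynomial.aeval (Ideal.Quotient.mk I (X 0))).toRingHom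
  have hker' : J ≤ RingHom.ker ψ := by
    rw [hJ, Ideal.span_le]
    rintro g rfl
    simp only [SetLike.mem_coe, RingHom.mem_ker]
    show Polynomial.aeval (Ideal.Quotient.mk I (X 0)) (Polynomial.X ^ d ^ 2) = 0
    rw [map_pow, Polynomial.aeval_X, h0]
  let G : (Polynomial k ⧸ J) →+* MvPolynomial (Fin 4) k ⧸ I := Ideal.Quotient.lift J ψ hker'
  have hG : ∀ p : Polynomial k,
      G (Ideal.Quotient.mk J p) = Polynomial.aeval (Ideal.Quotient.mk I (X 0)) p := fun p =>
    Ideal.Quotient.lift_mk J ψ hker'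
  have hFG : F.comp G = RingHom.id _ := by
    refine Ideal.Quotient.ringHom_ext (Polynomial.ringHom_ext ?_ ?_)
    · intro a
      simp only [RingHom.comp_apply, RingHom.id_apply]
      rw [hG, Polynomial.aeval_C, ← Ideal.Quotient.mk_algebraMap, hF, AlgHom.commutes,
        Polynomial.algebraMap_eq]
    · simp only [RingHom.comp_apply, RingHom.id_apply]
      rw [hG, Polynomial.aeval_X, hF, aeval_X, hv0]
  have hGF : G.comp F = RingHom.id _ := by
    refine Ideal.Quotient.ringHom_ext (MvPolynomial.ringHom_ext ?_ ?_)
    · intro a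
      simp only [RingHom.comp_apply, RingHom.id_apply]
      rw [hF, aeval_C, Polynomial.algebraMap_eq, hG, Polynomial.aeval_C,
        ← Ideal.Quotient.mk_algebraMap, MvPolynomial.algebraMap_eq]
    · intro i
      fin_cases i <;>
        simp only [RingHom.comp_apply, RingHom.id_apply, hF, aeval_X, hG]
      · show Polynomial.aeval (Ideal.Quotient.mk I (X 0)) Polynomial.X
            = Ideal.Quotient.mk I (X 0)
        rw [Polynomial.aeval_X]
      · show Polynomial.aeval (Ideal.Quotient.mk I (X 0)) 0 = Ideal.Quotient.mk I (X 1)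
        rw [map_zero, h1]
      · show Polynomial.aeval (Ideal.Quotient.mk I (X 0)) (Polynomial.X ^ d)
            = Ideal.Quotient.mk I (X 2)
        rw [map_pow, Polynomial.aeval_X, h2]
      · show Polynomial.aeval (Ideal.Quotient.mk I (X 0)) 1 = Ideal.Quotient.mk I (X 3)
        rw [map_one, h3]
  let E : (MvPolynomial (Fin 4) k ⧸ I) ≃+* Polynomial k ⧸ J := RingEquiv.ofRingHom F G hFG hGF
  refine ⟨?_, ⟨E⟩⟩
  intro δ
  have hEmk : E (Ideal.Quotient.mk I ((X 0 : MvPolynomial (Fin 4) k) ^ δ)) =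
      Ideal.Quotient.mk J ((Polynomial.X : Polynomial k) ^ δ) := by
    show F (Ideal.Quotient.mk I ((X 0 : MvPolynomial (Fin 4) k) ^ δ)) = _
    rw [hF, map_pow, aeval_X, hv0]
  constructor
  · intro h
    have : Ideal.Quotient.mk J ((Polynomial.X : Polynomial k) ^ δ) = 0 := by
      rw [← hEmk, h, map_zero]
    have hmemJ : (Polynomial.X : Polynomial k) ^ δ ∈ J := Ideal.Quotient.eq_zero_iff_mem.1 this
    rw [hJ, Ideal.mem_span_singleton] at hmemJ
    have := Polynomial.natDegree_le_of_dvd hmemJ (pow_ne_zero _ Polynomial.X_ne_zero)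
    simpa using this
  · intro h
    apply E.injective
    rw [hEmk, map_zero]
    exact Ideal.Quotient.eq_zero_iff_mem.2
      (Ideal.mem_span_singleton.2 (pow_dvd_pow _ h))
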